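/- arXiv:math/0511113 — 3 statements merged into one kernel-verified Lean document; each statement's English description precedes it below -/
import Mathlib

section
/- In the group ring R[G] the left ideals R[G](1−σ) = {x(1−σ) : x ∈ R[G]} and R[G](1−τ) = {x(1−τ) : x ∈ R[G]} intersect trivially: R[G](1−σ) ∩ R[G](1−τ) = 0. -/
open Monoid

namespace St6

/-! ### Auxiliary constructions: the free product of two subgroups as an indexed coproduct -/

variable {G : Type*} [Group G] (A B : Subgroup G)

/-- The two-element family of groups `A`, `B` indexed by `Bool`. -/
abbrev Fam : Bool → Type _ := fun b => cond b A B

instance : ∀ b, Group (Fam A B b)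
  | true => inferInstanceAs (Group A)
  | false => inferInstanceAs (Group B)

/-- The canonical homomorphisms into `G`. -/
def famHom : ∀ b, Fam A B b →* G
  | true => A.subtype
  | false => B.subtype

/-- The canonical homomorphisms into the binary coproduct. -/
def famCoprodHom : ∀ b, Fam A B b →* Coprod A B
  | true => Coprod.inl
  | false => Coprod.inr

/-- From the indexed coproduct to the binary coproduct. -/
def psi : CoprodI (Fam A B) →* Coprod A B := CoprodI.lift (famCoprodHom A B)

/-- From the binary coproduct to the indexed coproduct. -/
def rho : Coprod A B →* CoprodI (Fam A B) :=
  Coprod.lift (CoprodI.of (M := Fam A B) (i := true)) (CoprodI.of (M := Fam A B) (i := false))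

theorem psi_of {i : Bool} (m : Fam A B i) :
    psi A B (CoprodI.of m) = famCoprodHom A B i m := CoprodI.lift_of _ _

/-- The canonical homomorphism from the indexed coproduct to `G`. -/
def bigHom : CoprodI (Fam A B) →* G := CoprodI.lift (famHom A B)

theorem bigHom_of {i : Bool} (m : Fam A B i) :
    bigHom A B (CoprodI.of m) = famHom A B i m := CoprodI.lift_of _ _

theorem rho_comp_psi : (rho A B).comp (psi A B) = MonoidHom.id _ :=
  CoprodI.ext_hom _ _ fun i => by
    ext x
    show rho A B (psi A B (CoprodI.of x)) = CoprodI.of x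
    rw [psi_of]
    cases i
    · exact Coprod.lift_apply_inr _ _ _
    · exact Coprod.lift_apply_inl _ _ _

theorem psi_comp_rho : (psi A B).comp (rho A B) = MonoidHom.id _ := by
  apply Coprod.hom_ext
  · ext x
    show psi A B (rho A B (Coprod.inl x)) = Coprod.inl x
    rw [show rho A B (Coprod.inl x) = CoprodI.of (M := Fam A B) (i := true) x from
      Coprod.lift_apply_inl _ _ _]
    exact psi_of A B (i := true) x
  · ext x
    show psi A B (rho A B (Coprod.inr x)) = Coprod.inr x
    rw [show rho A B (Coprod.inr x) = CoprodI.of (M := Fam A B) (i := false) x from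
      Coprod.lift_apply_inr _ _ _]
    exact psi_of A B (i := false) x

theorem psi_bijective : Function.Bijective (psi A B) := by
  have h1 : Function.LeftInverse (rho A B) (psi A B) := fun x =>
    DFunLike.congr_fun (rho_comp_psi A B) x
  have h2 : Function.RightInverse (rho A B) (psi A B) := fun x =>
    DFunLike.congr_fun (psi_comp_rho A B) x
  exact ⟨h1.injective, h2.surjective⟩

theorem bigHom_eq : bigHom A B = (Coprod.lift A.subtype B.subtype).comp (psi A B) :=
  CoprodI.ext_hom _ _ fun i => by
    ext x
    show bigHom A B (CoprodI.of x) = Coprod.lift A.subtype B.subtype (psi A B (CoprodI.of x))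
    rw [bigHom_of, psi_of]
    cases i
    · exact (Coprod.lift_apply_inr _ _ _).symm
    · exact (Coprod.lift_apply_inl _ _ _).symm

theorem bigHom_bijective
    (hfree : Function.Bijective (Coprod.lift A.subtype B.subtype)) :
    Function.Bijective (bigHom A B) := by
  rw [bigHom_eq]
  exact hfree.comp (psi_bijective A B)

/-- In a free product of two subgroups there is a length function such that, for every `g`,
right multiplication by all nontrivial elements of at least one of the two factors strictly
increases the length. -/
theorem exists_length (hfree : Function.Bijective (Coprod.lift A.subtype B.subtype)) :
    ∃ ℓ : G → ℕ, ∀ g : G,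
      (∀ a ∈ A, a ≠ 1 → ℓ g < ℓ (g * a)) ∨ (∀ b ∈ B, b ≠ 1 → ℓ g < ℓ (g * b)) := by
  classical
  let e : CoprodI (Fam A B) ≃* G := MulEquiv.ofBijective _ (bigHom_bijective A B hfree)
  let L : CoprodI (Fam A B) → ℕ := fun w => (CoprodI.Word.equiv w).toList.length
  have key : ∀ (w : CoprodI (Fam A B)) (i : Bool) (m : Fam A B i), m ≠ 1 →
      CoprodI.Word.fstIdx (CoprodI.Word.equiv w) ≠ some i →
      L (CoprodI.of m * w) = L w + 1 := by
    intro w i m hm hfst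
    have h1 : CoprodI.Word.equiv (CoprodI.of m * w)
        = CoprodI.of m • CoprodI.Word.equiv w := by
      rw [Equiv.apply_eq_iff_eq_symm_apply]
      show CoprodI.of m * w = CoprodI.Word.prod (CoprodI.of m • CoprodI.Word.equiv w)
      rw [CoprodI.Word.prod_smul]
      congr 1
      exact (CoprodI.Word.equiv.symm_apply_apply w).symm
    show (CoprodI.Word.equiv (CoprodI.of m * w)).toList.length = _
    rw [h1, ← CoprodI.Word.cons_eq_smul (m := m) (ls := CoprodI.Word.equiv w)
      (h1 := hfst) (h2 := hm)]
    simp [CoprodI.Word.cons]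
    rfl
  have hsymm : ∀ (i : Bool) (m : Fam A B i), e.symm (famHom A B i m) = CoprodI.of m := by
    intro i m
    rw [MulEquiv.symm_apply_eq]
    exact (bigHom_of A B m).symm
  refine ⟨fun g => L (e.symm g⁻¹), fun g => ?_⟩
  have hdi : CoprodI.Word.fstIdx (CoprodI.Word.equiv (e.symm g⁻¹)) ≠ some true ∨
      CoprodI.Word.fstIdx (CoprodI.Word.equiv (e.symm g⁻¹)) ≠ some false := by
    rcases h : CoprodI.Word.fstIdx (CoprodI.Word.equiv (e.symm g⁻¹)) with _ | b
    · exact Or.inl (by simp)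
    · cases b
      · exact Or.inl (by simp)
      · exact Or.inr (by simp)
  rcases hdi with hfst | hfst
  · left
    intro a ha h1
    set m : Fam A B true := (⟨a, ha⟩ : A)⁻¹ with hmdef
    have hm : m ≠ 1 := by
      intro hc
      apply h1
      have : (⟨a, ha⟩ : A) = 1 := inv_eq_one.mp hc
      exact congrArg Subtype.val this
    have hcoe : famHom A B true m = a⁻¹ := rfl
    have hsplit : e.symm ((g * a)⁻¹) = CoprodI.of m * e.symm g⁻¹ := by
      rw [mul_inv_rev, map_mul]
      congr 1
      rw [← hcoe, hsymm]
    show L (e.symm g⁻¹) < L (e.symm (g * a)⁻¹)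
    rw [hsplit, key _ true m hm hfst]
    omega
  · right
    intro b hb h1
    set m : Fam A B false := (⟨b, hb⟩ : B)⁻¹ with hmdef
    have hm : m ≠ 1 := by
      intro hc
      apply h1
      have : (⟨b, hb⟩ : B) = 1 := inv_eq_one.mp hc
      exact congrArg Subtype.val this
    have hcoe : famHom A B false m = b⁻¹ := rfl
    have hsplit : e.symm ((g * b)⁻¹) = CoprodI.of m * e.symm g⁻¹ := by
      rw [mul_inv_rev, map_mul]
      congr 1
      rw [← hcoe, hsymm]
    show L (e.symm g⁻¹) < L (e.symm (g * b)⁻¹)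
    rw [hsplit, key _ false m hm hfst]
    omega

/-! ### Group ring lemmas -/

/-- The pushforward to `R[G ⧸ A]` kills `x * (1 - σ)` when `σ ∈ A`. -/
theorem push_zero {R : Type*} [CommRing R] {G : Type*} [Group G] (A : Subgroup G)
    {σ : G} (hσ : σ ∈ A) (x : MonoidAlgebra R G) :
    Finsupp.mapDomain (QuotientGroup.mk : G → G ⧸ A)
      (x * (1 - MonoidAlgebra.of R G σ)).coeff = 0 := by
  induction x using MonoidAlgebra.induction_linear with
  | zero => simp
  | add f g hf hg =>
    rw [add_mul, MonoidAlgebra.coeff_add, Finsupp.mapDomain_add, hf, hg, add_zero]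
  | single a b =>
    have h1 : (MonoidAlgebra.single a b) * (1 - MonoidAlgebra.of R G σ)
        = MonoidAlgebra.single a b - MonoidAlgebra.single (a * σ) b := by
      rw [mul_sub, mul_one, MonoidAlgebra.of_apply,
        MonoidAlgebra.single_mul_single, mul_one]
    show Finsupp.mapDomain (QuotientGroup.mk : G → G ⧸ A)
      ((MonoidAlgebra.single a b) * (1 - MonoidAlgebra.of R G σ)).coeff = 0
    rw [h1, sub_eq_add_neg, ← MonoidAlgebra.single_neg, MonoidAlgebra.coeff_add,
      MonoidAlgebra.coeff_single, MonoidAlgebra.coeff_single, Finsupp.mapDomain_add,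
      Finsupp.mapDomain_single, Finsupp.mapDomain_single,
      QuotientGroup.mk_mul_of_mem a hσ, Finsupp.single_neg]
    simp

/-- If the pushforward of `z` to `R[G ⧸ H]` vanishes, then every element of the support of `z`
has a distinct coset-mate in the support. -/
theorem exists_mate {R : Type*} [CommRing R] {G : Type*} [Group G] (H : Subgroup G)
    (z : MonoidAlgebra R G)
    (hz : Finsupp.mapDomain (QuotientGroup.mk : G → G ⧸ H) z.coeff = 0)
    {g : G} (hg : g ∈ z.coeff.support) :
    ∃ h ∈ z.coeff.support, h ≠ g ∧ g⁻¹ * h ∈ H := by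
  classical
  by_contra hno
  push_neg at hno
  have hval : (Finsupp.mapDomain (QuotientGroup.mk : G → G ⧸ H) z.coeff)
      ((g : G ⧸ H)) = 0 := by rw [hz]; rfl
  rw [Finsupp.mapDomain, Finsupp.sum_apply, Finsupp.sum] at hval
  simp only [Finsupp.single_apply] at hval
  rw [Finset.sum_eq_single g ?h1 ?h2] at hval
  · simp only [if_pos rfl] at hval
    exact (Finsupp.mem_support_iff.mp hg) hval
  case h1 =>
    intro b hb hbg
    rw [if_neg]
    intro hmk
    exact hno b hb hbg ((QuotientGroup.eq).mp hmk.symm)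
  case h2 =>
    intro hgs
    exact absurd hg hgs

/-- Combinatorial core: given a suitable length function, an element of the group ring whose
pushforwards to both coset spaces vanish must be zero. -/
theorem core {R : Type*} [CommRing R] {G : Type*} [Group G] (A B : Subgroup G)
    (ℓ : G → ℕ)
    (hℓ : ∀ g : G, (∀ a ∈ A, a ≠ 1 → ℓ g < ℓ (g * a)) ∨ (∀ b ∈ B, b ≠ 1 → ℓ g < ℓ (g * b)))
    (z : MonoidAlgebra R G)
    (hA : Finsupp.mapDomain (QuotientGroup.mk : G → G ⧸ A) z.coeff = 0)
    (hB : Finsupp.mapDomain (QuotientGroup.mk : G → G ⧸ B) z.coeff = 0) : z = 0 := by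
  classical
  by_contra hz
  have hsupp : z.coeff.support.Nonempty :=
    Finsupp.support_nonempty_iff.mpr (fun h => hz (MonoidAlgebra.coeff_eq_zero.mp h))
  obtain ⟨g, hg, hmax⟩ := z.coeff.support.exists_max_image ℓ hsupp
  rcases hℓ g with hcase | hcase
  · obtain ⟨h, hh, hhg, hmem⟩ := exists_mate A z hA hg
    have h1 : g * (g⁻¹ * h) = h := by group
    have h2 : g⁻¹ * h ≠ 1 := fun hc => hhg (by
      have := congrArg (g * ·) hc
      simpa [h1] using this)
    have := hcase (g⁻¹ * h) hmem h2
    rw [h1] at this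
    exact absurd (hmax h hh) (not_le.mpr this)
  · obtain ⟨h, hh, hhg, hmem⟩ := exists_mate B z hB hg
    have h1 : g * (g⁻¹ * h) = h := by group
    have h2 : g⁻¹ * h ≠ 1 := fun hc => hhg (by
      have := congrArg (g * ·) hc
      simpa [h1] using this)
    have := hcase (g⁻¹ * h) hmem h2
    rw [h1] at this
    exact absurd (hmax h hh) (not_le.mpr this)

end St6

/-- **Statement 6.** Let `G` be a group which is the free product of a cyclic group of
order 2 generated by `σ` and a cyclic group of order `n ≥ 3` generated by `τ` (such as a
Hecke triangle group).  In the group ring `R[G]` the left ideals `R[G](1-σ)` and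
`R[G](1-τ)` intersect trivially. -/
theorem statement6 {G : Type*} [Group G] (n : ℕ) (hn : 3 ≤ n) (σ τ : G)
    (hσ : orderOf σ = 2) (hτ : orderOf τ = n)
    (hfree : Function.Bijective
      (Monoid.Coprod.lift (Subgroup.zpowers σ).subtype (Subgroup.zpowers τ).subtype))
    (R : Type*) [CommRing R]
    (y : MonoidAlgebra R G)
    (hy1 : ∃ x : MonoidAlgebra R G, y = x * (1 - MonoidAlgebra.of R G σ))
    (hy2 : ∃ x : MonoidAlgebra R G, y = x * (1 - MonoidAlgebra.of R G τ)) :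
    y = 0 := by
  classical
  obtain ⟨x1, h1⟩ := hy1
  obtain ⟨x2, h2⟩ := hy2
  obtain ⟨ℓ, hℓ⟩ := St6.exists_length (Subgroup.zpowers σ) (Subgroup.zpowers τ) hfree
  refine St6.core (Subgroup.zpowers σ) (Subgroup.zpowers τ) ℓ hℓ y ?_ ?_
  · rw [h1]
    exact St6.push_zero _ (Subgroup.mem_zpowers σ) x1
  · rw [h2]
    exact St6.push_zero _ (Subgroup.mem_zpowers τ) x2
end

section
/- The sequence of R-modules 0 → R[G]N_σ + R[G]N_τ → R[G] → R[G/⟨T⟩] → R → 0 is exact, where the second map sends a group element g ∈ G to the element g(1−σ)·∞ = [g⟨T⟩] − [gσ⟨T⟩] of the free R-module R[G/⟨T⟩] on the coset space G/⟨T⟩, and the third map is the augmentation sending each coset to 1. -/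
noncomputable section

variable {G : Type*} [Group G] (R : Type*) [CommRing R]

/-- `N_g = 1 + g + ⋯ + g^(m-1) ∈ R[G]` for an element `g` of finite order `m`. -/
def Nelt (g : G) : MonoidAlgebra R G :=
  ∑ i ∈ Finset.range (orderOf g), MonoidAlgebra.of R G (g ^ i)

variable (G) in
/-- The cusp set `G(∞)`, identified with the coset space `G/⟨T⟩` via `g∞ ↦ g⟨T⟩`. -/
abbrev CuspSet (T : G) := G ⧸ Subgroup.zpowers T

/-- The map `R[G] → R[G/⟨T⟩]` sending a group element `g ∈ G` to
`g(1-σ)∞ = [g⟨T⟩] - [gσ⟨T⟩]`. -/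
def cuspMap (σ T : G) : MonoidAlgebra R G →ₗ[R] (CuspSet G T →₀ R) :=
  (Finsupp.linearCombination R fun g : G =>
    Finsupp.single (QuotientGroup.mk g : CuspSet G T) (1 : R) -
      Finsupp.single (QuotientGroup.mk (g * σ) : CuspSet G T) (1 : R)) ∘ₗ
    (MonoidAlgebra.coeffLinearEquiv R).toLinearMap

/-- The augmentation map `R[G/⟨T⟩] → R` sending each coset to `1`. -/
def cuspAug (T : G) : (CuspSet G T →₀ R) →ₗ[R] R :=
  Finsupp.linearCombination R fun _ : CuspSet G T => (1 : R)

namespace Statement7Aux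

def Red (n : ℕ) (l : List ℕ) : Prop :=
  (∀ x ∈ l, x < n) ∧ l.IsChain (fun x y => x = 0 ↔ y ≠ 0)

theorem Red.nil {n : ℕ} : Red n [] := ⟨by simp, List.isChain_nil⟩

def aAct : List ℕ → List ℕ
  | [] => [0]
  | 0 :: t => t
  | (x+1) :: t => 0 :: (x+1) :: t

def bAct (n k : ℕ) : List ℕ → List ℕ
  | [] => if k % n = 0 then [] else [k % n]
  | x :: t =>
    if x = 0 then (if k % n = 0 then 0 :: t else (k % n) :: 0 :: t)
    else (if (x + k) % n = 0 then t else ((x + k) % n) :: t)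

theorem bAct_nil {n k : ℕ} : bAct n k [] = if k % n = 0 then [] else [k % n] := rfl

theorem bAct_cons {n k x : ℕ} {t : List ℕ} : bAct n k (x :: t) =
    if x = 0 then (if k % n = 0 then 0 :: t else (k % n) :: 0 :: t)
    else (if (x + k) % n = 0 then t else ((x + k) % n) :: t) := rfl

-- head of tail of a reduced list starting with a nonzero letter is 0 (if any)
theorem red_tail_zero {n x : ℕ} {y : ℕ} {t : List ℕ}
    (h : Red n (x :: y :: t)) (hx : x ≠ 0) : y = 0 := by
  have := (List.isChain_cons_cons.1 h.2).1
  by_contra hy; exact hx (this.2 hy)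

theorem red_tail_nonzero {n y : ℕ} {t : List ℕ}
    (h : Red n (0 :: y :: t)) : y ≠ 0 := by
  have := (List.isChain_cons_cons.1 h.2).1
  simpa using this.1 rfl

theorem Red.tail {n x : ℕ} {t : List ℕ} (h : Red n (x :: t)) : Red n t :=
  ⟨fun y hy => h.1 y (List.mem_cons_of_mem _ hy), h.2.tail⟩

theorem aAct_red {n : ℕ} (hn : 0 < n) {l : List ℕ} (h : Red n l) : Red n (aAct l) := by
  rcases l with _ | ⟨x, t⟩
  · exact ⟨by simpa [aAct] using hn, List.isChain_singleton _⟩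
  · rcases x with _ | x
    · exact h.tail
    · refine ⟨?_, List.isChain_cons_cons.2 ⟨by simp, h.2⟩⟩
      intro y hy
      rcases List.mem_cons.1 hy with rfl | hy
      · exact hn
      · exact h.1 y hy

theorem aAct_aAct {n : ℕ} {l : List ℕ} (h : Red n l) : aAct (aAct l) = l := by
  rcases l with _ | ⟨x, t⟩
  · rfl
  · rcases x with _ | x
    · show aAct t = 0 :: t
      rcases t with _ | ⟨y, t'⟩
      · rfl
      · have hy : y ≠ 0 := red_tail_nonzero h
        rcases y with _ | y
        · exact absurd rfl hy
        · rfl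
    · rfl

theorem bAct_red {n : ℕ} (hn : 0 < n) (k : ℕ) {l : List ℕ} (h : Red n l) :
    Red n (bAct n k l) := by
  rcases l with _ | ⟨x, t⟩
  · rw [bAct_nil]
    split_ifs with hk
    · exact Red.nil
    · exact ⟨by simpa using Nat.mod_lt k hn, List.isChain_singleton _⟩
  · rw [bAct_cons]
    split_ifs with hx hk hm
    · exact hx ▸ h
    · subst hx
      refine ⟨?_, List.isChain_cons_cons.2 ⟨by simpa using hk, h.2⟩⟩
      intro y hy
      rcases List.mem_cons.1 hy with rfl | hy
      · exact Nat.mod_lt k hn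
      · exact h.1 y hy
    · exact h.tail
    · refine ⟨?_, ?_⟩
      · intro y hy
        rcases List.mem_cons.1 hy with rfl | hy
        · exact Nat.mod_lt _ hn
        · exact h.1 y (List.mem_cons_of_mem _ hy)
      · rcases t with _ | ⟨y, t'⟩
        · exact List.isChain_singleton _
        · have hy : y = 0 := red_tail_zero h hx
          exact List.isChain_cons_cons.2 ⟨by simp [hy, hm], (List.isChain_cons_cons.1 h.2).2⟩

theorem bAct_zero {n : ℕ} {l : List ℕ} (h : Red n l) : bAct n 0 l = l := by
  rcases l with _ | ⟨x, t⟩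
  · simp [bAct_nil]
  · rw [bAct_cons]
    have hx : x < n := h.1 x (by simp)
    split_ifs with h1 h2 h3
    · rw [h1]
    · simp at h2
    · exact absurd (by simpa [Nat.mod_eq_of_lt hx] using h3) h1
    · simp [Nat.mod_eq_of_lt hx]

theorem bAct_mod {n : ℕ} (k : ℕ) (l : List ℕ) : bAct n (k % n) l = bAct n k l := by
  rcases l with _ | ⟨x, t⟩
  · rw [bAct_nil, bAct_nil, Nat.mod_mod_of_dvd _ dvd_rfl]
  · rw [bAct_cons, bAct_cons, Nat.mod_mod_of_dvd _ dvd_rfl]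
    have e2 : (x + k % n) % n = (x + k) % n := by
      conv_rhs => rw [Nat.add_mod]
      rw [Nat.add_mod, Nat.mod_mod_of_dvd _ dvd_rfl]
    rw [e2]

theorem bAct_step {n : ℕ} (hn : 1 < n) (k : ℕ) {l : List ℕ} (h : Red n l) :
    bAct n 1 (bAct n k l) = bAct n (k+1) l := by
  have h1n : (1 : ℕ) % n = 1 := Nat.mod_eq_of_lt hn
  have key : ∀ m : ℕ, (m + 1) % n = (m % n + 1) % n := fun m => by
    rw [Nat.add_mod, h1n]
  have hn0 : 0 < n := Nat.lt_of_lt_of_le Nat.zero_lt_one hn.le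
  rcases l with _ | ⟨x, t⟩
  · rw [bAct_nil]
    split_ifs with hk
    · rw [bAct_nil, if_neg (by rw [h1n]; exact one_ne_zero), h1n, bAct_nil,
        if_neg (by rw [key, hk]; simpa [h1n] using one_ne_zero)]
      rw [key, hk, Nat.zero_add, h1n]
    · rw [bAct_cons, if_neg hk, bAct_nil]
      have e : (k % n + 1) % n = (k + 1) % n := (key k).symm
      rw [e]
  · have hx : x < n := h.1 x (by simp)
    rw [bAct_cons]
    split_ifs with hxz hk h3
    · -- x = 0, k % n = 0
      subst hxz
      rw [bAct_cons, if_pos rfl, if_neg (by rw [h1n]; exact one_ne_zero), h1n,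
        bAct_cons, if_pos rfl, if_neg (by rw [key, hk]; simpa [h1n] using one_ne_zero)]
      rw [key, hk, Nat.zero_add, h1n]
    · -- x = 0, k % n ≠ 0
      subst hxz
      have hkn : k % n ≠ 0 := hk
      rw [bAct_cons, if_neg hkn]
      have e : (k % n + 1) % n = (k + 1) % n := (key k).symm
      rw [e, bAct_cons, if_pos rfl]
    · -- x ≠ 0, (x+k) % n = 0
      have emod : ((x + k) % n + 1) % n = (x + (k + 1)) % n := by
        rw [← Nat.add_assoc, key (x + k)]
      · -- goal bAct n 1 t = bAct n (k+1) (x::t) with second branch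
        have e2 : (x + (k+1)) % n = 1 := by rw [← emod, h3, Nat.zero_add, h1n]
        rw [bAct_cons, if_neg hxz, if_neg (by rw [e2]; exact one_ne_zero), e2]
        rcases t with _ | ⟨y, t'⟩
        · rw [bAct_nil, if_neg (by rw [h1n]; exact one_ne_zero), h1n]
        · have hy : y = 0 := red_tail_zero h hxz
          subst hy
          rw [bAct_cons, if_pos rfl, if_neg (by rw [h1n]; exact one_ne_zero), h1n]
    · -- x ≠ 0, (x+k) % n ≠ 0
      have emod : ((x + k) % n + 1) % n = (x + (k + 1)) % n := by
        rw [← Nat.add_assoc, key (x + k)]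
      rw [bAct_cons, if_neg h3, bAct_cons, if_neg hxz, emod]

theorem bAct_add {n : ℕ} (hn : 1 < n) (j k : ℕ) {l : List ℕ} (h : Red n l) :
    bAct n j (bAct n k l) = bAct n (j + k) l := by
  induction j with
  | zero => rw [Nat.zero_add]; exact bAct_zero (bAct_red (by omega) k h)
  | succ j ih =>
    have : bAct n (j+1) (bAct n k l) = bAct n 1 (bAct n j (bAct n k l)) :=
      (bAct_step hn j (bAct_red (by omega) k h)).symm
    rw [this, ih, bAct_step hn (j + k) h]
    congr 1
    omega


section GroupLayer


theorem hom_of_zpowers (g : G) {K : Type*} [Group K] (π : K) (hπ : π ^ orderOf g = 1) :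
    ∃ f : (Subgroup.zpowers g) →* K,
      ∀ (k : ℤ) (b : Subgroup.zpowers g), g ^ k = (b : G) → f b = π ^ k := by
  have welldef : ∀ j k : ℤ, g ^ j = g ^ k → π ^ j = π ^ k := by
    intro j k hjk
    have h1 : g ^ (j - k) = 1 := by
      rw [zpow_sub, hjk, mul_inv_cancel]
    obtain ⟨c, hc⟩ := orderOf_dvd_iff_zpow_eq_one.2 h1
    have h2 : π ^ (j - k) = 1 := by
      rw [hc, zpow_mul, zpow_natCast, hπ, one_zpow]
    calc π ^ j = π ^ (k + (j - k)) := by ring_nf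
    _ = π ^ k * π ^ (j - k) := zpow_add π k (j - k)
    _ = π ^ k := by rw [h2, mul_one]
  choose sel hsel using fun b : Subgroup.zpowers g => Subgroup.mem_zpowers_iff.mp b.2
  have key : ∀ (k : ℤ) (b : Subgroup.zpowers g), g ^ k = (b : G) → π ^ (sel b) = π ^ k := by
    intro k b hk
    exact welldef _ _ (by rw [hsel b, hk])
  refine ⟨{ toFun := fun b => π ^ (sel b), map_one' := ?_, map_mul' := ?_ }, ?_⟩
  · show π ^ sel 1 = 1
    rw [key 0 1 (by simp)]
    exact zpow_zero π
  · intro b c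
    show π ^ sel (b * c) = π ^ sel b * π ^ sel c
    rw [key (sel b + sel c) (b * c) (by rw [zpow_add, hsel b, hsel c]; rfl), zpow_add]
  · intro k b hk
    exact key k b hk

theorem word_machine {n : ℕ} (hn : 3 ≤ n) (σ τ : G)
    (hσ : orderOf σ = 2) (hτ : orderOf τ = n)
    (hfree : Function.Bijective
      (Monoid.Coprod.lift (Subgroup.zpowers σ).subtype (Subgroup.zpowers τ).subtype)) :
    ∃ (ℓ : G → ℕ) (tA tB : G → Prop),
      (∀ g, tA g → ¬ tB g) ∧
      (∀ g, ¬ tA g → tA (g * σ) ∧ ℓ (g * σ) = ℓ g + 1) ∧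
      (∀ g, tA g → ¬ tA (g * σ)) ∧
      (∀ g, ¬ tB g → ∀ i, 1 ≤ i → i < n → tB (g * τ ^ i) ∧ ℓ (g * τ ^ i) = ℓ g + 1) ∧
      (∀ g, tB g → ∃ i, 1 ≤ i ∧ i < n ∧ ¬ tB (g * τ ^ i)) := by
  have hn0 : 0 < n := by omega
  have hn1 : 1 < n := by omega
  set W := {l : List ℕ // Red n l} with hW
  let πA : Equiv.Perm W :=
    { toFun := fun w => ⟨aAct w.1, aAct_red hn0 w.2⟩
      invFun := fun w => ⟨aAct w.1, aAct_red hn0 w.2⟩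
      left_inv := fun w => Subtype.ext (aAct_aAct w.2)
      right_inv := fun w => Subtype.ext (aAct_aAct w.2) }
  have bact_n : ∀ w : W, bAct n n w.1 = w.1 := by
    intro w
    have := bAct_mod (n := n) n w.1
    rw [Nat.mod_self] at this
    rw [← this, bAct_zero w.2]
  let πB : Equiv.Perm W :=
    { toFun := fun w => ⟨bAct n 1 w.1, bAct_red hn0 1 w.2⟩
      invFun := fun w => ⟨bAct n (n-1) w.1, bAct_red hn0 (n-1) w.2⟩
      left_inv := fun w => Subtype.ext (by
        show bAct n (n-1) (bAct n 1 w.1) = w.1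
        rw [bAct_add hn1 (n-1) 1 w.2, (by omega : n - 1 + 1 = n), bact_n])
      right_inv := fun w => Subtype.ext (by
        show bAct n 1 (bAct n (n-1) w.1) = w.1
        rw [bAct_add hn1 1 (n-1) w.2, (by omega : 1 + (n - 1) = n), bact_n]) }
  have hπBpow : ∀ (k : ℕ) (w : W), ((πB ^ k) w).1 = bAct n k w.1 := by
    intro k
    induction k with
    | zero => intro w; rw [pow_zero]; exact (bAct_zero w.2).symm
    | succ k ih =>
      intro w
      rw [pow_succ, Equiv.Perm.mul_apply, ih]
      show bAct n k (bAct n 1 w.1) = _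
      rw [bAct_add hn1 k 1 w.2]
  have hπA2 : πA ^ orderOf σ = 1 := by
    rw [hσ, pow_two]
    exact Equiv.ext fun w => Subtype.ext (aAct_aAct w.2)
  have hπBn : πB ^ orderOf τ = 1 := by
    rw [hτ]
    refine Equiv.ext fun w => Subtype.ext ?_
    show ((πB ^ n) w).1 = w.1
    rw [hπBpow n w, bact_n]
  obtain ⟨fA, hfA⟩ := hom_of_zpowers σ πA hπA2
  obtain ⟨fB, hfB⟩ := hom_of_zpowers τ πB hπBn
  let e : Monoid.Coprod (Subgroup.zpowers σ) (Subgroup.zpowers τ) ≃* G :=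
    MulEquiv.ofBijective _ hfree
  let Φ : G →* Equiv.Perm W := (Monoid.Coprod.lift fA fB).comp e.symm.toMonoidHom
  have hΦσ : Φ σ = πA := by
    have h1 : e (Monoid.Coprod.inl ⟨σ, Subgroup.mem_zpowers σ⟩) = σ := by
      show (Monoid.Coprod.lift (Subgroup.zpowers σ).subtype (Subgroup.zpowers τ).subtype)
        (Monoid.Coprod.inl ⟨σ, Subgroup.mem_zpowers σ⟩) = σ
      rw [Monoid.Coprod.lift_apply_inl]
      rfl
    have h2 : e.symm σ = Monoid.Coprod.inl ⟨σ, Subgroup.mem_zpowers σ⟩ :=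
      (MulEquiv.symm_apply_eq e).mpr h1.symm
    show (Monoid.Coprod.lift fA fB) (e.symm σ) = πA
    rw [h2, Monoid.Coprod.lift_apply_inl]
    rw [hfA 1 ⟨σ, Subgroup.mem_zpowers σ⟩ (zpow_one σ), zpow_one]
  have hΦτ : Φ τ = πB := by
    have h1 : e (Monoid.Coprod.inr ⟨τ, Subgroup.mem_zpowers τ⟩) = τ := by
      show (Monoid.Coprod.lift (Subgroup.zpowers σ).subtype (Subgroup.zpowers τ).subtype)
        (Monoid.Coprod.inr ⟨τ, Subgroup.mem_zpowers τ⟩) = τ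
      rw [Monoid.Coprod.lift_apply_inr]
      rfl
    have h2 : e.symm τ = Monoid.Coprod.inr ⟨τ, Subgroup.mem_zpowers τ⟩ :=
      (MulEquiv.symm_apply_eq e).mpr h1.symm
    show (Monoid.Coprod.lift fA fB) (e.symm τ) = πB
    rw [h2, Monoid.Coprod.lift_apply_inr]
    rw [hfB 1 ⟨τ, Subgroup.mem_zpowers τ⟩ (zpow_one τ), zpow_one]
  set nf : G → W := fun g => Φ g ⟨[], Red.nil⟩ with hnf
  have nf_mul : ∀ g h : G, nf (g * h) = Φ g (nf h) := by
    intro g h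
    show Φ (g * h) _ = _
    rw [map_mul]
    rfl
  -- step lemmas
  have stepA : ∀ g : G, (nf (g * σ)⁻¹).1 = aAct (nf g⁻¹).1 := by
    intro g
    rw [mul_inv_rev, nf_mul]
    have hσinv : σ⁻¹ = σ := by
      have h2 : σ * σ = 1 := by
        have := pow_orderOf_eq_one σ
        rwa [hσ, pow_two] at this
      exact inv_eq_of_mul_eq_one_left h2
    rw [hσinv, hΦσ]
    rfl
  have stepB : ∀ (g : G) (i : ℕ), i ≤ n → (nf (g * τ ^ i)⁻¹).1 = bAct n (n - i) (nf g⁻¹).1 := by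
    intro g i hi
    rw [mul_inv_rev, nf_mul]
    have hτn : τ ^ n = 1 := by rw [← hτ]; exact pow_orderOf_eq_one τ
    have hinv : (τ ^ i)⁻¹ = τ ^ (n - i) := by
      apply inv_eq_of_mul_eq_one_left
      rw [← pow_add, (by omega : n - i + i = n), hτn]
    rw [hinv, map_pow, hΦτ, hπBpow]
  refine ⟨fun g => (nf g⁻¹).1.length,
    fun g => (nf g⁻¹).1.head? = some 0,
    fun g => ∃ m, m ≠ 0 ∧ (nf g⁻¹).1.head? = some m, ?_, ?_, ?_, ?_, ?_⟩
  · rintro g hA ⟨m, hm, hB⟩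
    rw [hA] at hB
    exact hm (by injection hB.symm)
  · -- F1
    intro g hg
    replace hg : ¬ ((nf g⁻¹).1.head? = some 0) := hg
    refine ⟨show (nf (g * σ)⁻¹).1.head? = some 0 from ?_,
      show (nf (g * σ)⁻¹).1.length = (nf g⁻¹).1.length + 1 from ?_⟩ <;>
      rw [stepA g] <;> rcases hl : (nf g⁻¹).1 with _ | ⟨x, t⟩
    · rfl
    · have hx : x ≠ 0 := fun h => hg (by rw [hl, h]; rfl)
      rcases x with _ | x
      · exact absurd rfl hx
      · rfl
    · rfl
    · have hx : x ≠ 0 := fun h => hg (by rw [hl, h]; rfl)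
      rcases x with _ | x
      · exact absurd rfl hx
      · rfl
  · -- F1'
    intro g hg
    replace hg : (nf g⁻¹).1.head? = some 0 := hg
    show ¬ ((nf (g * σ)⁻¹).1.head? = some 0)
    rw [stepA g]
    rcases hl : (nf g⁻¹).1 with _ | ⟨x, t⟩
    · rw [hl] at hg; exact absurd hg (by simp)
    · have hx : x = 0 := by rw [hl] at hg; injection hg
      subst hx
      have hred : Red n (0 :: t) := hl ▸ (nf g⁻¹).2
      rcases t with _ | ⟨y, t'⟩
      · simp [aAct]
      · have hy : y ≠ 0 := red_tail_nonzero hred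
        simp [aAct, hy]
  · -- F2
    intro g hg i hi1 hi2
    replace hg : ¬ (∃ m, m ≠ 0 ∧ (nf g⁻¹).1.head? = some m) := hg
    have hj1 : n - i ≠ 0 := by omega
    have hjlt : n - i < n := by omega
    have hjmod : (n - i) % n = n - i := Nat.mod_eq_of_lt hjlt
    refine ⟨show ∃ m, m ≠ 0 ∧ (nf (g * τ ^ i)⁻¹).1.head? = some m from ?_,
      show (nf (g * τ ^ i)⁻¹).1.length = (nf g⁻¹).1.length + 1 from ?_⟩ <;>
      rw [stepB g i (by omega)] <;> rcases hl : (nf g⁻¹).1 with _ | ⟨x, t⟩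
    · rw [bAct_nil, if_neg (by rw [hjmod]; exact hj1), hjmod]
      exact ⟨n - i, hj1, rfl⟩
    · have hx : x = 0 := by
        by_contra hx
        exact hg ⟨x, hx, by rw [hl]; simp⟩
      subst hx
      rw [bAct_cons, if_pos rfl, if_neg (by rw [hjmod]; exact hj1), hjmod]
      exact ⟨n - i, hj1, rfl⟩
    · rw [bAct_nil, if_neg (by rw [hjmod]; exact hj1)]
      simp
    · have hx : x = 0 := by
        by_contra hx
        exact hg ⟨x, hx, by rw [hl]; simp⟩
      subst hx
      rw [bAct_cons, if_pos rfl, if_neg (by rw [hjmod]; exact hj1)]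
      simp
  · -- F3
    intro g hgB
    replace hgB : ∃ m, m ≠ 0 ∧ (nf g⁻¹).1.head? = some m := hgB
    obtain ⟨m, hm, hB⟩ := hgB
    rcases hl : (nf g⁻¹).1 with _ | ⟨x, t⟩
    · rw [hl] at hB; exact absurd hB (by simp)
    · have hx : x = m := by rw [hl] at hB; injection hB
      subst hx
      have hred : Red n (x :: t) := hl ▸ (nf g⁻¹).2
      have hmlt : x < n := hred.1 x (by simp)
      refine ⟨x, by omega, hmlt, ?_⟩
      show ¬ (∃ m', m' ≠ 0 ∧ (nf (g * τ ^ x)⁻¹).1.head? = some m')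
      rw [stepB g x (by omega), hl, bAct_cons, if_neg hm,
        if_pos (by rw [(by omega : x + (n - x) = n), Nat.mod_self])]
      rintro ⟨m', hm', hB'⟩
      rcases t with _ | ⟨y, t'⟩
      · exact absurd hB' (by simp)
      · have hy : y = 0 := red_tail_zero hred hm
        rw [hy] at hB'
        exact hm' (by injection hB'.symm)

end GroupLayer

section AlgebraLayer


theorem indep {n : ℕ} (hn : 0 < n) (σ τ : G) (ℓ : G → ℕ) (tA tB : G → Prop)
    (hAB : ∀ g, tA g → ¬ tB g)
    (F1 : ∀ g, ¬ tA g → tA (g * σ) ∧ ℓ (g * σ) = ℓ g + 1)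
    (F2 : ∀ g, ¬ tB g → ∀ i, 1 ≤ i → i < n → tB (g * τ ^ i) ∧ ℓ (g * τ ^ i) = ℓ g + 1)
    (x : MonoidAlgebra R G)
    (HA : ∀ g, x.coeff g + x.coeff (g * σ) = 0)
    (HB : ∀ g, ∑ i ∈ Finset.range n, x.coeff (g * τ ^ i) = 0) : x = 0 := by
  by_contra hx
  obtain ⟨g, hg, hmax⟩ := Finset.exists_max_image x.coeff.support ℓ
    (Finsupp.support_nonempty_iff.2 (mt MonoidAlgebra.coeff_eq_zero.1 hx))
  have hxg : x.coeff g ≠ 0 := Finsupp.mem_support_iff.1 hg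
  by_cases htA : tA g
  · -- use HB
    have hnB : ¬ tB g := hAB g htA
    have hex : ∃ i ∈ Finset.range n, i ≠ 0 ∧ x.coeff (g * τ ^ i) ≠ 0 := by
      by_contra hcon
      push_neg at hcon
      have hsum := HB g
      rw [Finset.sum_eq_single_of_mem 0 (Finset.mem_range.2 hn)
        (fun i hi hne => by
          by_contra hxi
          exact hxi (hcon i hi hne))] at hsum
      rw [pow_zero, mul_one] at hsum
      exact hxg hsum
    obtain ⟨i, hi, hi0, hxi⟩ := hex
    have hF := (F2 g hnB i (by omega) (Finset.mem_range.1 hi)).2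
    have hmem : g * τ ^ i ∈ x.coeff.support := Finsupp.mem_support_iff.2 hxi
    have := hmax _ hmem
    omega
  · have hF := F1 g htA
    have hxgs : x.coeff (g * σ) ≠ 0 := by
      intro h0
      have := HA g
      rw [h0, add_zero] at this
      exact hxg this
    have hmem : g * σ ∈ x.coeff.support := Finsupp.mem_support_iff.2 hxgs
    have := hmax _ hmem
    omega

theorem kerSigma (σ : G) (hord : orderOf σ = 2) (tA : G → Prop)
    (F1 : ∀ g, ¬ tA g → tA (g * σ)) (F1' : ∀ g, tA g → ¬ tA (g * σ))
    (x : MonoidAlgebra R G) (hx : ∀ h, x.coeff h = x.coeff (h * σ)) :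
    ∃ y : MonoidAlgebra R G, y * Nelt R σ = x := by
  classical
  have hσ2 : σ * σ = 1 := by
    have := pow_orderOf_eq_one σ
    rwa [hord, pow_two] at this
  have hσinv : σ⁻¹ = σ := inv_eq_of_mul_eq_one_left hσ2
  have hNσ : Nelt R σ = MonoidAlgebra.single 1 1 + MonoidAlgebra.single σ 1 := by
    rw [Nelt, hord, Finset.sum_range_succ, Finset.sum_range_one, pow_zero, pow_one]
    simp [MonoidAlgebra.of_apply]
  refine ⟨MonoidAlgebra.ofCoeff (x.coeff.filter (fun h => ¬ tA h)), ?_⟩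
  ext h
  rw [hNσ, mul_add, MonoidAlgebra.coeff_add, Finsupp.add_apply, MonoidAlgebra.mul_single_apply,
    MonoidAlgebra.mul_single_apply, inv_one, mul_one, mul_one, mul_one, hσinv]
  rw [MonoidAlgebra.coeff_ofCoeff, Finsupp.filter_apply, Finsupp.filter_apply]
  by_cases htA : tA h
  · rw [if_neg (by simpa using htA), if_pos (by simpa using F1' h htA), zero_add]
    exact (hx h).symm
  · rw [if_pos (by simpa using htA), if_neg (by simpa using F1 h htA), add_zero]

theorem kerTau {n : ℕ} (hn : 3 ≤ n) (τ : G) (hord : orderOf τ = n) (tB : G → Prop)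
    (F2 : ∀ g, ¬ tB g → ∀ i, 1 ≤ i → i < n → tB (g * τ ^ i))
    (F3 : ∀ g, tB g → ∃ i, 1 ≤ i ∧ i < n ∧ ¬ tB (g * τ ^ i))
    (x : MonoidAlgebra R G) (hx : ∀ h, x.coeff h = x.coeff (h * τ)) :
    ∃ y : MonoidAlgebra R G, y * Nelt R τ = x := by
  classical
  have hτn : τ ^ n = 1 := by rw [← hord]; exact pow_orderOf_eq_one τ
  have hconst : ∀ (h : G) (k : ℕ), x.coeff (h * τ ^ k) = x.coeff h := by
    intro h k
    induction k with
    | zero => rw [pow_zero, mul_one]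
    | succ k ih =>
      rw [pow_succ, ← mul_assoc, ← hx (h * τ ^ k)]
      exact ih
  have hexist : ∀ h : G, ∃ i, i < n ∧ ¬ tB (h * τ ^ i) := by
    intro h
    by_cases htB : tB h
    · obtain ⟨i, hi1, hi2, hi3⟩ := F3 h htB
      exact ⟨i, hi2, hi3⟩
    · exact ⟨0, by omega, by rwa [pow_zero, mul_one]⟩
  have huniq : ∀ (h : G) (i j : ℕ), i < n → j < n →
      ¬ tB (h * τ ^ i) → ¬ tB (h * τ ^ j) → i = j := by
    have aux : ∀ (h : G) (i j : ℕ), i < j → j < n →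
        ¬ tB (h * τ ^ i) → ¬ tB (h * τ ^ j) → False := by
      intro h i j hij hj hni hnj
      have : h * τ ^ j = (h * τ ^ i) * τ ^ (j - i) := by
        rw [mul_assoc, ← pow_add]
        congr 2
        omega
      rw [this] at hnj
      exact hnj ((F2 _ hni (j - i) (by omega) (by omega)))
    intro h i j hi hj hni hnj
    rcases lt_trichotomy i j with hlt | heq | hgt
    · exact absurd (aux h i j hlt hj hni hnj) (not_false)
    · exact heq
    · exact absurd (aux h j i hgt hi hnj hni) (not_false)
  have hNτ : Nelt R τ = ∑ i ∈ Finset.range n, MonoidAlgebra.single (τ ^ i) 1 := by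
    rw [Nelt, hord]
    rfl
  refine ⟨MonoidAlgebra.ofCoeff (x.coeff.filter (fun h => ¬ tB h)), ?_⟩
  set y : MonoidAlgebra R G := MonoidAlgebra.ofCoeff (x.coeff.filter (fun h => ¬ tB h)) with hy
  ext h
  have happ : (y * Nelt R τ).coeff h = ∑ i ∈ Finset.range n, y.coeff (h * (τ ^ i)⁻¹) := by
    rw [hNτ, Finset.mul_sum, MonoidAlgebra.coeff_sum, Finsupp.finset_sum_apply]
    refine Finset.sum_congr rfl fun i _ => ?_
    rw [MonoidAlgebra.mul_single_apply, mul_one]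
  rw [happ]
  -- rewrite each term with nat exponent
  have hinv : ∀ i, i < n → h * (τ ^ i)⁻¹ = h * τ ^ (if i = 0 then 0 else n - i) := by
    intro i hi
    rcases Nat.eq_zero_or_pos i with rfl | hi0
    · simp
    · rw [if_neg (by omega)]
      congr 1
      apply inv_eq_of_mul_eq_one_left
      rw [← pow_add, (by omega : n - i + i = n), hτn]
  obtain ⟨i₀, hi₀n, hi₀⟩ := hexist h
  set i₁ := if i₀ = 0 then 0 else n - i₀ with hi₁
  have hi₁n : i₁ < n := by
    rw [hi₁]; split_ifs <;> omega
  have hi₁formula : (if i₁ = 0 then 0 else n - i₁) = i₀ := by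
    rw [hi₁]
    rcases Nat.eq_zero_or_pos i₀ with rfl | h0
    · simp
    · rw [if_neg (show ¬ i₀ = 0 by omega), if_neg (show ¬ n - i₀ = 0 by omega)]
      omega
  rw [Finset.sum_eq_single_of_mem i₁ (Finset.mem_range.2 hi₁n)]
  · rw [hinv i₁ hi₁n, hi₁formula, hy, MonoidAlgebra.coeff_ofCoeff, Finsupp.filter_apply, if_pos (by simpa using hi₀)]
    exact (hconst h i₀)
  · intro i hi hne
    rw [hinv i (Finset.mem_range.1 hi), hy, MonoidAlgebra.coeff_ofCoeff, Finsupp.filter_apply]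
    set j := if i = 0 then 0 else n - i with hj
    have hjn : j < n := by rw [hj]; split_ifs <;> omega
    have : tB (h * τ ^ j) := by
      by_contra hcon
      have hji : j = i₀ := huniq h j i₀ hjn hi₀n hcon hi₀
      apply hne
      rw [hi₁, ← hji, hj]
      rcases Nat.eq_zero_or_pos i with rfl | h0
      · simp
      · have hilt := Finset.mem_range.1 hi
        rw [if_neg (show ¬ i = 0 by omega), if_neg (show ¬ n - i = 0 by omega)]
        omega
    rw [if_neg (by simpa using this)]

end AlgebraLayer


theorem mem_oneSubT (T : G) (v : MonoidAlgebra R G)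
    (hv : Finsupp.mapDomain (QuotientGroup.mk : G → G ⧸ Subgroup.zpowers T) v.coeff = 0) :
    ∃ z : MonoidAlgebra R G, z * (1 - MonoidAlgebra.single T 1) = v := by
  classical
  set D : Submodule R (MonoidAlgebra R G) :=
    LinearMap.range (LinearMap.mulRight R ((1 : MonoidAlgebra R G) - MonoidAlgebra.single T 1))
    with hD
  have hDnat : ∀ (g : G) (m : ℕ),
      MonoidAlgebra.single g (1:R) - MonoidAlgebra.single (g * T ^ m) 1 ∈ D := by
    intro g m
    induction m with
    | zero => rw [pow_zero, mul_one, sub_self]; exact D.zero_mem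
    | succ m ih =>
      have h2 : MonoidAlgebra.single (g * T ^ m) (1:R) -
          MonoidAlgebra.single (g * T ^ (m+1)) 1 ∈ D := by
        refine ⟨MonoidAlgebra.single (g * T ^ m) (1:R), ?_⟩
        rw [LinearMap.mulRight_apply, mul_sub, mul_one, MonoidAlgebra.single_mul_single,
          mul_one, pow_succ, mul_assoc]
      have := D.add_mem ih h2
      rwa [sub_add_sub_cancel] at this
  have hDint : ∀ (g : G) (k : ℤ),
      MonoidAlgebra.single g (1:R) - MonoidAlgebra.single (g * T ^ k) 1 ∈ D := by
    intro g k
    obtain (m | m) := k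
    · rw [Int.ofNat_eq_coe, zpow_natCast]; exact hDnat g m
    · rw [zpow_negSucc]
      have h2 := hDnat (g * (T ^ (m+1))⁻¹) (m+1)
      rw [inv_mul_cancel_right] at h2
      have := D.neg_mem h2
      rwa [neg_sub] at this
  have hsingle : ∀ (g : G) (b : R),
      MonoidAlgebra.single g b -
        MonoidAlgebra.single (Quotient.out (QuotientGroup.mk g : G ⧸ Subgroup.zpowers T)) b
        ∈ D := by
    intro g b
    obtain ⟨k, hk⟩ := Subgroup.mem_zpowers_iff.1
      ((QuotientGroup.eq).1 (QuotientGroup.out_eq'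
        (QuotientGroup.mk g : G ⧸ Subgroup.zpowers T)).symm)
    have hout : Quotient.out (QuotientGroup.mk g : G ⧸ Subgroup.zpowers T) = g * T ^ k := by
      rw [hk, mul_inv_cancel_left]
    rw [hout]
    have := D.smul_mem b (hDint g k)
    rw [smul_sub, MonoidAlgebra.smul_single', MonoidAlgebra.smul_single'] at this
    simpa using this
  let Ψ : MonoidAlgebra R G →ₗ[R] MonoidAlgebra R G :=
    MonoidAlgebra.mapDomainLinearMap R R (fun g => Quotient.out (QuotientGroup.mk g : G ⧸ Subgroup.zpowers T))
  have hΨsingle : ∀ (a : G) (b : R), Ψ (MonoidAlgebra.single a b) =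
      MonoidAlgebra.single (Quotient.out (QuotientGroup.mk a : G ⧸ Subgroup.zpowers T)) b := by
    intro a b
    show MonoidAlgebra.mapDomain (fun g => Quotient.out (QuotientGroup.mk g : G ⧸ Subgroup.zpowers T))
      (MonoidAlgebra.single a b) = _
    rw [MonoidAlgebra.mapDomain_single]
  have hstep : ∀ w : MonoidAlgebra R G, w - Ψ w ∈ D := by
    intro w
    induction w using MonoidAlgebra.induction_linear with
    | zero => rw [map_zero, sub_zero]; exact D.zero_mem
    | add f g hf hg =>
      rw [map_add, add_sub_add_comm]
      exact D.add_mem hf hg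
    | single a b =>
      rw [hΨsingle]
      exact hsingle a b
  have hzero : Ψ v = 0 := by
    show MonoidAlgebra.ofCoeff (Finsupp.mapDomain _ v.coeff) = 0
    have hcomp : (fun g => Quotient.out (QuotientGroup.mk g : G ⧸ Subgroup.zpowers T)) =
        (Quotient.out : G ⧸ Subgroup.zpowers T → G) ∘
          (QuotientGroup.mk : G → G ⧸ Subgroup.zpowers T) := rfl
    rw [hcomp, Finsupp.mapDomain_comp, hv, Finsupp.mapDomain_zero, MonoidAlgebra.ofCoeff_zero]
  have hvD : v ∈ D := by
    have := hstep v
    rwa [hzero, sub_zero] at this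
  obtain ⟨z, hz⟩ := hvD
  exact ⟨z, by rwa [LinearMap.mulRight_apply] at hz⟩

end Statement7Aux

/-- **Statement 7.** Let `G` be the free product of `⟨σ⟩ ≅ ℤ/2ℤ` and `⟨τ⟩ ≅ ℤ/nℤ` (`n ≥ 3`),
e.g. a Hecke triangle group, and set `T = τσ`.  The sequence of `R`-modules
`0 → R[G]N_σ + R[G]N_τ → R[G] → R[G/⟨T⟩] → R → 0` is exact, where the second map sends
`g ∈ G` to `[g⟨T⟩] - [gσ⟨T⟩]` and the third map is the augmentation. -/
theorem statement7 (n : ℕ) (hn : 3 ≤ n) (σ τ : G)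
    (hσ : orderOf σ = 2) (hτ : orderOf τ = n)
    (hfree : Function.Bijective
      (Monoid.Coprod.lift (Subgroup.zpowers σ).subtype (Subgroup.zpowers τ).subtype))
    (T : G) (hT : T = τ * σ) :
    LinearMap.range (LinearMap.mulRight R (Nelt R σ)) ⊔
        LinearMap.range (LinearMap.mulRight R (Nelt R τ)) =
      LinearMap.ker (cuspMap R σ T) ∧
    LinearMap.range (cuspMap R σ T) = LinearMap.ker (cuspAug R T) ∧
    Function.Surjective (cuspAug R T) := by
  classical
  have hn0 : 0 < n := by omega
  have hσ2 : σ * σ = 1 := by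
    have := pow_orderOf_eq_one σ
    rwa [hσ, pow_two] at this
  have hσinv : σ⁻¹ = σ := inv_eq_of_mul_eq_one_left hσ2
  have hτn : τ ^ n = 1 := by rw [← hτ]; exact pow_orderOf_eq_one τ
  obtain ⟨ℓ, tA, tB, hAB, F1, F1', F2, F3⟩ := Statement7Aux.word_machine hn σ τ hσ hτ hfree
  set u1 : MonoidAlgebra R G := 1 - MonoidAlgebra.single σ 1 with hu1
  set uT : MonoidAlgebra R G := 1 - MonoidAlgebra.single T 1 with huT
  have coef : ∀ (v : MonoidAlgebra R G) (s h : G),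
      ((v * MonoidAlgebra.single s 1 : MonoidAlgebra R G)).coeff h = v.coeff (h * s⁻¹) := by
    intro v s h
    rw [MonoidAlgebra.mul_single_apply, mul_one]
  have hsingleu1 : ∀ (g : G) (b : R), MonoidAlgebra.single g b * u1 =
      MonoidAlgebra.single g b - MonoidAlgebra.single (g * σ) b := by
    intro g b
    rw [hu1, mul_sub, mul_one, MonoidAlgebra.single_mul_single, mul_one]
  have hc1 : cuspMap R σ T =
      (Finsupp.lmapDomain R R (QuotientGroup.mk : G → CuspSet G T)).comp
        ((MonoidAlgebra.coeffLinearEquiv R).toLinearMap.comp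
        ((LinearMap.mulRight R u1 : MonoidAlgebra R G →ₗ[R] MonoidAlgebra R G))) := by
    apply MonoidAlgebra.lhom_ext'
    intro g
    apply LinearMap.ext
    intro b
    simp only [LinearMap.comp_apply, MonoidAlgebra.lsingle_apply, LinearMap.mulRight_apply,
      hsingleu1, map_sub, LinearEquiv.coe_coe, MonoidAlgebra.coeffLinearEquiv_apply,
      MonoidAlgebra.coeff_single, Finsupp.lmapDomain_apply, Finsupp.mapDomain_single]
    refine Eq.trans (Finsupp.linearCombination_single R b g) ?_
    rw [smul_sub, Finsupp.smul_single, Finsupp.smul_single, smul_eq_mul, mul_one]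
  have hc1' : ∀ x : MonoidAlgebra R G, cuspMap R σ T x =
      Finsupp.mapDomain (QuotientGroup.mk : G → CuspSet G T) (x * u1).coeff := by
    intro x
    refine (LinearMap.congr_fun hc1 x).trans ?_
    exact Finsupp.lmapDomain_apply R R _ _
  have aapp : ∀ (c : CuspSet G T) (b : R), cuspAug R T (Finsupp.single c b) = b := by
    intro c b
    refine Eq.trans (Finsupp.linearCombination_single R b c) ?_
    rw [smul_eq_mul, mul_one]
  have hmkT : ∀ g : G, (QuotientGroup.mk (g * T) : CuspSet G T) = QuotientGroup.mk g := by
    intro g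
    apply (QuotientGroup.eq).2
    have e : (g * T)⁻¹ * g = T⁻¹ := by group
    rw [e]
    exact Subgroup.inv_mem _ (Subgroup.mem_zpowers T)
  have hkill : ∀ z : MonoidAlgebra R G,
      Finsupp.mapDomain (QuotientGroup.mk : G → CuspSet G T) (z * uT).coeff = 0 := by
    intro z
    induction z using MonoidAlgebra.induction_linear with
    | zero => rw [zero_mul, MonoidAlgebra.coeff_zero, Finsupp.mapDomain_zero]
    | add f g hf hg => rw [add_mul, MonoidAlgebra.coeff_add, Finsupp.mapDomain_add, hf, hg, add_zero]
    | single a b =>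
      have h1 : MonoidAlgebra.single a b * uT =
          MonoidAlgebra.single a b - MonoidAlgebra.single (a * T) b := by
        rw [huT, mul_sub, mul_one, MonoidAlgebra.single_mul_single, mul_one]
      rw [h1, MonoidAlgebra.coeff_sub, MonoidAlgebra.coeff_single, MonoidAlgebra.coeff_single,
        ← Finsupp.lmapDomain_apply R R, map_sub, Finsupp.lmapDomain_apply,
        Finsupp.lmapDomain_apply, Finsupp.mapDomain_single, Finsupp.mapDomain_single,
        hmkT, sub_self]
  have hNσ : Nelt R σ = MonoidAlgebra.single 1 1 + MonoidAlgebra.single σ 1 := by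
    rw [Nelt, hσ, Finset.sum_range_succ, Finset.sum_range_one, pow_zero, pow_one]
    simp [MonoidAlgebra.of_apply]
  have hNσu1 : Nelt R σ * u1 = 0 := by
    rw [hNσ, hu1, mul_sub, mul_one, add_mul]
    simp only [MonoidAlgebra.single_mul_single, one_mul, mul_one]
    rw [hσ2]
    abel
  have hNτdef : Nelt R τ = ∑ i ∈ Finset.range n, MonoidAlgebra.single (τ ^ i) 1 := by
    rw [Nelt, hτ]
    simp [MonoidAlgebra.of_apply]
  have hNτmulτ : Nelt R τ * MonoidAlgebra.single τ 1 = Nelt R τ := by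
    rw [hNτdef, Finset.sum_mul]
    simp only [MonoidAlgebra.single_mul_single, mul_one]
    have hps : ∀ i : ℕ, τ ^ i * τ = τ ^ (i + 1) := fun i => (pow_succ τ i).symm
    simp only [hps]
    obtain ⟨m, hm⟩ : ∃ m, n = m + 1 := ⟨n - 1, by omega⟩
    have hτm : τ ^ (m + 1) = 1 := by rw [← hm]; exact hτn
    rw [hm]
    conv_rhs => rw [Finset.sum_range_succ']
    rw [Finset.sum_range_succ, hτm, pow_zero]
  have hNτuT : Nelt R τ * u1 = Nelt R τ * uT := by
    rw [hu1, huT, mul_sub, mul_sub]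
    congr 1
    rw [hT]
    have e : MonoidAlgebra.single (τ * σ) (1:R) =
        MonoidAlgebra.single τ 1 * MonoidAlgebra.single σ 1 := by
      rw [MonoidAlgebra.single_mul_single, mul_one]
    rw [e, ← mul_assoc, hNτmulτ]
  refine ⟨?_, ?_, ?_⟩
  · apply le_antisymm
    · apply sup_le
      · intro p hp
        obtain ⟨a, rfl⟩ := LinearMap.mem_range.1 hp
        rw [LinearMap.mem_ker, LinearMap.mulRight_apply, hc1', mul_assoc, hNσu1, mul_zero,
          MonoidAlgebra.coeff_zero, Finsupp.mapDomain_zero]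
      · intro p hp
        obtain ⟨b, rfl⟩ := LinearMap.mem_range.1 hp
        rw [LinearMap.mem_ker, LinearMap.mulRight_apply, hc1', mul_assoc, hNτuT, ← mul_assoc]
        exact hkill (b * Nelt R τ)
    · intro x hx
      rw [LinearMap.mem_ker, hc1'] at hx
      obtain ⟨z, hz⟩ := Statement7Aux.mem_oneSubT R T (x * u1) hx
      have hzuT : z * uT = x * u1 := hz
      have hsplit : uT = (1 - MonoidAlgebra.single τ 1) + MonoidAlgebra.single τ 1 * u1 := by
        rw [huT, hu1, mul_sub, mul_one, MonoidAlgebra.single_mul_single, mul_one, hT]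
        abel
      set u : MonoidAlgebra R G := x - z * MonoidAlgebra.single τ 1 with hu
      have hw : u * u1 = z * (1 - MonoidAlgebra.single τ 1) := by
        rw [hu, sub_mul, ← hzuT, hsplit, mul_add, ← mul_assoc]
        abel
      set w : MonoidAlgebra R G := u * u1 with hwdef
      have hwA : ∀ g : G, w.coeff g + w.coeff (g * σ) = 0 := by
        intro g
        have h1 : ∀ h : G, w.coeff h = u.coeff h - u.coeff (h * σ) := by
          intro h
          rw [hwdef, hu1, mul_sub, mul_one, MonoidAlgebra.coeff_sub, Finsupp.sub_apply, coef, hσinv]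
        rw [h1, h1]
        have e : g * σ * σ = g := by rw [mul_assoc, hσ2, mul_one]
        rw [e]
        ring
      have hwB : ∀ g : G, ∑ i ∈ Finset.range n, w.coeff (g * τ ^ i) = 0 := by
        intro g
        have h1 : ∀ h : G, w.coeff h = z.coeff h - z.coeff (h * τ⁻¹) := by
          intro h
          rw [hw, mul_sub, mul_one, MonoidAlgebra.coeff_sub, Finsupp.sub_apply, coef]
        obtain ⟨m, hm⟩ : ∃ m, n = m + 1 := ⟨n - 1, by omega⟩
        have hτm1 : τ ^ m * τ = 1 := by rw [← pow_succ, ← hm]; exact hτn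
        have e0 : g * τ ^ 0 * τ⁻¹ = g * τ ^ m := by
          rw [pow_zero, mul_one, inv_eq_of_mul_eq_one_left hτm1]
        have es : ∀ i : ℕ, g * τ ^ (i + 1) * τ⁻¹ = g * τ ^ i := by
          intro i
          rw [pow_succ, ← mul_assoc, mul_inv_cancel_right]
        calc ∑ i ∈ Finset.range n, w.coeff (g * τ ^ i)
            = ∑ i ∈ Finset.range n, (z.coeff (g * τ ^ i) - z.coeff (g * τ ^ i * τ⁻¹)) :=
              Finset.sum_congr rfl fun i _ => h1 _
          _ = ∑ i ∈ Finset.range n, z.coeff (g * τ ^ i)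
              - ∑ i ∈ Finset.range n, z.coeff (g * τ ^ i * τ⁻¹) := Finset.sum_sub_distrib _ _
          _ = 0 := by
              rw [hm, Finset.sum_range_succ' (fun i => z.coeff (g * τ ^ i * τ⁻¹)) m]
              simp only [es, e0]
              rw [Finset.sum_range_succ (fun i => z.coeff (g * τ ^ i)) m, sub_self]
      have hwzero : w = 0 :=
        Statement7Aux.indep R hn0 σ τ ℓ tA tB hAB F1 F2 w hwA hwB
      have h0 : u * u1 = 0 := by rw [← hwdef]; exact hwzero
      have huσ : ∀ h : G, u.coeff h = u.coeff (h * σ) := by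
        have h2 : u = u * MonoidAlgebra.single σ 1 := by
          rw [hu1, mul_sub, mul_one, sub_eq_zero] at h0
          exact h0
        intro h
        conv_lhs => rw [h2]
        rw [coef, hσinv]
      have hzτ0 : z * (1 - MonoidAlgebra.single τ 1) = 0 := by
        rw [← hw]
        exact hwzero
      have hzτ : ∀ h : G, z.coeff h = z.coeff (h * τ) := by
        have h2 : z = z * MonoidAlgebra.single τ 1 := by
          rw [mul_sub, mul_one, sub_eq_zero] at hzτ0
          exact hzτ0
        intro h
        conv_rhs => rw [h2]
        rw [coef, mul_inv_cancel_right]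
      obtain ⟨a, ha⟩ := Statement7Aux.kerSigma R σ hσ tA (fun g hg => (F1 g hg).1) F1' u huσ
      obtain ⟨b, hb⟩ := Statement7Aux.kerTau R hn τ hτ tB
        (fun g hg i hi1 hi2 => (F2 g hg i hi1 hi2).1) F3 z hzτ
      have hxeq : x = a * Nelt R σ + b * Nelt R τ := by
        have hx2 : x = u + z * MonoidAlgebra.single τ 1 := by rw [hu, sub_add_cancel]
        rw [hx2, ← ha, ← hb, mul_assoc, hNτmulτ]
      rw [hxeq]
      exact Submodule.mem_sup.2 ⟨a * Nelt R σ, ⟨a, LinearMap.mulRight_apply R _ _⟩,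
        b * Nelt R τ, ⟨b, LinearMap.mulRight_apply R _ _⟩, rfl⟩
  · apply le_antisymm
    · rintro y hy
      obtain ⟨x, rfl⟩ := LinearMap.mem_range.1 hy
      rw [LinearMap.mem_ker]
      clear hy
      induction x using MonoidAlgebra.induction_linear with
      | zero => rw [map_zero, map_zero]
      | add f g hf hg => rw [map_add, map_add, hf, hg, add_zero]
      | single g b =>
        have e1 : cuspMap R σ T (MonoidAlgebra.single g b) =
            Finsupp.single (QuotientGroup.mk g : CuspSet G T) b -
              Finsupp.single (QuotientGroup.mk (g * σ) : CuspSet G T) b := by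
          refine Eq.trans (Finsupp.linearCombination_single R b g) ?_
          rw [smul_sub, Finsupp.smul_single, Finsupp.smul_single, smul_eq_mul, mul_one]
        rw [e1, map_sub, aapp, aapp, sub_self]
    · intro v hv
      rw [LinearMap.mem_ker] at hv
      have htop : ∀ g : G, g ∈ Subgroup.closure ({σ, τ} : Set G) := by
        intro g
        obtain ⟨wrd, hwrd⟩ := hfree.2 g
        rw [← hwrd]
        refine Monoid.Coprod.induction_on (motive := fun w' =>
          (Monoid.Coprod.lift (Subgroup.zpowers σ).subtype (Subgroup.zpowers τ).subtype) w'
            ∈ Subgroup.closure ({σ, τ} : Set G)) wrd ?_ ?_ ?_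
        · intro a
          rw [Monoid.Coprod.lift_apply_inl]
          exact Subgroup.zpowers_le.2 (Subgroup.subset_closure (by simp)) a.2
        · intro b
          rw [Monoid.Coprod.lift_apply_inr]
          exact Subgroup.zpowers_le.2 (Subgroup.subset_closure (by simp)) b.2
        · intro p q hp hq
          rw [map_mul]
          exact Subgroup.mul_mem _ hp hq
      have hP : ∀ g : G, ∀ h : G,
          Finsupp.single (QuotientGroup.mk (h * g) : CuspSet G T) (1:R) -
            Finsupp.single (QuotientGroup.mk h : CuspSet G T) 1
            ∈ LinearMap.range (cuspMap R σ T) := by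
        intro g
        refine Subgroup.closure_induction
          (p := fun x _ => ∀ h : G,
            Finsupp.single (QuotientGroup.mk (h * x) : CuspSet G T) (1:R) -
              Finsupp.single (QuotientGroup.mk h : CuspSet G T) 1
              ∈ LinearMap.range (cuspMap R σ T)) ?_ ?_ ?_ ?_ (htop g)
        · intro x hx h
          rcases Set.mem_insert_iff.1 hx with hx1 | hx2
          · rw [hx1]
            refine ⟨-(MonoidAlgebra.single h 1), ?_⟩
            rw [map_neg]
            have e : cuspMap R σ T (MonoidAlgebra.single h 1) =
                Finsupp.single (QuotientGroup.mk h : CuspSet G T) (1:R) -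
                  Finsupp.single (QuotientGroup.mk (h * σ) : CuspSet G T) 1 := by
              refine Eq.trans (Finsupp.linearCombination_single R 1 h) ?_
              rw [one_smul]
            rw [e, neg_sub]
          · rw [Set.mem_singleton_iff.1 hx2]
            refine ⟨MonoidAlgebra.single (h * τ) 1, ?_⟩
            have e : cuspMap R σ T (MonoidAlgebra.single (h * τ) 1) =
                Finsupp.single (QuotientGroup.mk (h * τ) : CuspSet G T) (1:R) -
                  Finsupp.single (QuotientGroup.mk (h * τ * σ) : CuspSet G T) 1 := by
              refine Eq.trans (Finsupp.linearCombination_single R 1 (h * τ)) ?_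
              rw [one_smul]
            rw [e]
            have e2 : h * τ * σ = h * T := by rw [hT, mul_assoc]
            rw [e2, hmkT]
        · intro h
          rw [mul_one, sub_self]
          exact Submodule.zero_mem _
        · intro p q hp hq hPp hPq h
          have e : h * (p * q) = h * p * q := by rw [mul_assoc]
          rw [e]
          have := Submodule.add_mem _ (hPq (h * p)) (hPp h)
          rwa [sub_add_sub_cancel] at this
        · intro p hp hPp h
          have h2 := Submodule.neg_mem _ (hPp (h * p⁻¹))
          rw [neg_sub] at h2
          have e : h * p⁻¹ * p = h := by rw [mul_assoc, inv_mul_cancel, mul_one]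
          rwa [e] at h2
      have hconn : ∀ c : CuspSet G T,
          Finsupp.single c (1:R) - Finsupp.single (QuotientGroup.mk 1 : CuspSet G T) 1
            ∈ LinearMap.range (cuspMap R σ T) := by
        intro c
        obtain ⟨g, rfl⟩ := QuotientGroup.mk_surjective c
        have := hP g 1
        rwa [one_mul] at this
      have hgen : ∀ y : CuspSet G T →₀ R,
          y - Finsupp.single (QuotientGroup.mk 1 : CuspSet G T) (cuspAug R T y)
            ∈ LinearMap.range (cuspMap R σ T) := by
        intro y
        induction y using Finsupp.induction_linear with
        | zero => rw [map_zero, Finsupp.single_zero, sub_zero]; exact Submodule.zero_mem _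
        | add f g hf hg =>
          rw [map_add, Finsupp.single_add, add_sub_add_comm]
          exact Submodule.add_mem _ hf hg
        | single c b =>
          rw [aapp]
          have h2 := Submodule.smul_mem (LinearMap.range (cuspMap R σ T)) b (hconn c)
          rwa [smul_sub, Finsupp.smul_single, Finsupp.smul_single, smul_eq_mul, mul_one] at h2
      have hfin := hgen v
      rwa [hv, Finsupp.single_zero, sub_zero] at hfin
  · intro r
    exact ⟨Finsupp.single (QuotientGroup.mk 1 : CuspSet G T) r, aapp _ r⟩
end
end

section
/- Let X be a topological space, S a (not necessarily commutative) ring with unit, and let I be an injective object in the category of sheaves of left S-modules on X. Then for every open set U ⊆ X the S-module of sections I(U) is an injective object of the category of left S-modules. -/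
open CategoryTheory TopologicalSpace Opposite CategoryTheory.Limits

universe u

noncomputable section

namespace Statement15Aux

variable {C : Type*} [Category C] {D : Type*} [Category D]
  [∀ a b : C, HasCoproductsOfShape (a ⟶ b) D]
  [HasZeroMorphisms D] [HasZeroObject D]
  [∀ a b : C, Subsingleton (a ⟶ b)]

/-- A coproduct over an empty index type is initial. -/
def isInitialOfIsEmpty {ι : Type*} [IsEmpty ι] (f : ι → D) [HasCoproduct f] :
    IsInitial (∐ f) :=
  IsInitial.ofUniqueHom (fun _ => Sigma.desc (fun i => isEmptyElim i))
    (fun _ _ => Sigma.hom_ext _ _ (fun i => isEmptyElim i))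

instance evaluationLeftAdjoint_preservesMonomorphisms (c : C) :
    (evaluationLeftAdjoint D c).PreservesMonomorphisms := by
  constructor
  intro A B f hf
  rw [NatTrans.mono_iff_mono_app']
  intro t
  dsimp [evaluationLeftAdjoint]
  by_cases h : Nonempty (c ⟶ t)
  · have : Unique (c ⟶ t) := uniqueOfSubsingleton h.some
    have hfac : (Sigma.desc fun h => f ≫ Sigma.ι (fun _ : c ⟶ t => B) h)
        = Sigma.desc (fun _ : c ⟶ t => 𝟙 A) ≫ f ≫ Sigma.ι (fun _ : c ⟶ t => B) default := by
      apply Sigma.hom_ext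
      intro g
      simp [Subsingleton.elim g default]
    rw [hfac]
    have hiso : IsIso (Sigma.desc (fun _ : c ⟶ t => 𝟙 A)) := by
      refine ⟨Sigma.ι (fun _ : c ⟶ t => A) default, ?_, by simp⟩
      apply Sigma.hom_ext
      intro g
      simp [Subsingleton.elim g default]
    have hsplit : IsSplitMono (Sigma.ι (fun _ : c ⟶ t => B) default) :=
      IsSplitMono.mk' ⟨Sigma.desc (fun _ => 𝟙 B), by simp⟩
    exact mono_comp _ _
  · have : IsEmpty (c ⟶ t) := not_nonempty_iff.mp h
    exact (isInitialOfIsEmpty _).mono_from _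

end Statement15Aux

end

open Statement15Aux in
/-- **Statement 15.** Let `X` be a topological space, `S` a (not necessarily commutative)
ring with unit, and let `I` be an injective object in the category of sheaves of left
`S`-modules on `X`.  Then for every open set `U ⊆ X` the `S`-module of sections `I(U)` is
an injective object of the category of left `S`-modules. -/
theorem statement15 (X : TopCat.{u}) (S : Type u) [Ring S]
    (I : TopCat.Sheaf (ModuleCat.{u} S) X) (hI : Injective I) (U : Opens X) :
    Injective (I.val.obj (op U)) := by
  let J := Opens.grothendieckTopology X
  let L : ModuleCat.{u} S ⥤ TopCat.Sheaf (ModuleCat.{u} S) X :=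
    evaluationLeftAdjoint (ModuleCat.{u} S) (op U) ⋙ presheafToSheaf J _
  let R : TopCat.Sheaf (ModuleCat.{u} S) X ⥤ ModuleCat.{u} S :=
    sheafToPresheaf J _ ⋙ (evaluation _ _).obj (op U)
  let adj : L ⊣ R :=
    (evaluationAdjunctionRight (ModuleCat.{u} S) (op U)).comp
      (sheafificationAdjunction J _)
  have h1 : PreservesFiniteLimits (presheafToSheaf J (ModuleCat.{u} S)) := inferInstance
  have h2 : (presheafToSheaf J (ModuleCat.{u} S)).PreservesMonomorphisms :=
    CategoryTheory.preservesMonomorphisms_of_preservesLimitsOfShape _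
  have : L.PreservesMonomorphisms :=
    @Functor.preservesMonomorphisms_comp _ _ _ _ _ _ _ _ inferInstance h2
  exact Injective.injective_of_adjoint adj I
end
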